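/- arXiv:1902.11244 — 4 statements merged into one kernel-verified Lean document; each statement's English description precedes it below -/
import Mathlib

section
/- If L is the Laplacian matrix of a connected simple undirected graph on N nodes and Q is a positive semi-definite N×N real matrix such that for every initial state x0 and every gain g>0 the integral ∫₀^∞ x(t)ᵀQx(t) dt is finite, where x(t) = e^{-gLt}x0, then there exists a positive semi-definite matrix W such that Q = LWL. -/
open Matrix MeasureTheory Set

section aux
attribute [local instance] Matrix.linftyOpNormedRing Matrix.linftyOpNormedAlgebra

private lemma exp_mulVec_fixed {n : ℕ} (A : Matrix (Fin n) (Fin n) ℝ) (v : Fin n → ℝ)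
    (h : A *ᵥ v = 0) : NormedSpace.exp A *ᵥ v = v := by
  let f : Matrix (Fin n) (Fin n) ℝ →ₗ[ℝ] (Fin n → ℝ) :=
    { toFun := fun M => M *ᵥ v
      map_add' := fun M M' => Matrix.add_mulVec M M' v
      map_smul' := fun c M => Matrix.smul_mulVec c M v }
  let F := LinearMap.toContinuousLinearMap f
  have hs : Summable fun k : ℕ => ((Nat.factorial k : ℝ))⁻¹ • A ^ k := NormedSpace.expSeries_summable' A
  have hpow : ∀ k : ℕ, k ≠ 0 → A ^ k *ᵥ v = 0 := by
    intro k hk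
    obtain ⟨m, rfl⟩ := Nat.exists_eq_succ_of_ne_zero hk
    rw [pow_succ, ← Matrix.mulVec_mulVec, h, Matrix.mulVec_zero]
  have : F (∑' k : ℕ, ((Nat.factorial k : ℝ))⁻¹ • A ^ k) = ∑' k : ℕ, F (((Nat.factorial k : ℝ))⁻¹ • A ^ k) :=
    F.map_tsum hs
  rw [NormedSpace.exp_eq_tsum (𝕂 := ℝ)]
  show F (∑' k : ℕ, ((Nat.factorial k : ℝ))⁻¹ • A ^ k) = v
  have hF : ∀ X : Matrix (Fin n) (Fin n) ℝ, F X = X *ᵥ v := fun _ => rfl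
  rw [this]
  rw [tsum_eq_single 0 (by
    intro k hk
    rw [hF, Matrix.smul_mulVec, hpow k hk, smul_zero])]
  rw [hF, Matrix.smul_mulVec]
  simp

end aux

/-- If `L` is the Laplacian of a connected simple undirected graph (symmetric PSD with
kernel spanned by the all-ones vector) and `Q ⪰ 0` gives finite cost along every
closed-loop trajectory `x(t) = e^{-gLt} x0` with `g > 0`, then `Q = L W L` for some `W ⪰ 0`. -/
theorem stmt0 {N : ℕ} (L Q : Matrix (Fin N) (Fin N) ℝ)
    (hL : L.PosSemidef)
    (hker : LinearMap.ker L.mulVecLin = Submodule.span ℝ {(1 : Fin N → ℝ)})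
    (hQ : Q.PosSemidef)
    (hfin : ∀ (x0 : Fin N → ℝ) (g : ℝ), 0 < g →
      IntegrableOn
        (fun t : ℝ => (NormedSpace.exp ((-(g * t)) • L) *ᵥ x0) ⬝ᵥ
          (Q *ᵥ (NormedSpace.exp ((-(g * t)) • L) *ᵥ x0))) (Ici 0)) :
    ∃ W : Matrix (Fin N) (Fin N) ℝ, W.PosSemidef ∧ Q = L * W * L := by
  classical
  -- L annihilates the all-ones vector
  have hL1 : L *ᵥ (1 : Fin N → ℝ) = 0 := by
    have : (1 : Fin N → ℝ) ∈ LinearMap.ker L.mulVecLin := by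
      rw [hker]; exact Submodule.mem_span_singleton_self _
    simpa [Matrix.mulVecLin_apply] using this
  -- finite cost along constant trajectory forces Q 1 = 0
  have hQ1 : Q *ᵥ (1 : Fin N → ℝ) = 0 := by
    have hint := hfin 1 1 one_pos
    have hexp : ∀ t : ℝ, NormedSpace.exp ((-(1 * t)) • L) *ᵥ (1 : Fin N → ℝ) = 1 := by
      intro t
      apply exp_mulVec_fixed
      rw [Matrix.smul_mulVec, hL1, smul_zero]
    have hconst : IntegrableOn (fun _ : ℝ => (1 : Fin N → ℝ) ⬝ᵥ (Q *ᵥ 1)) (Ici 0) := by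
      simpa only [hexp] using hint
    have h0 : (1 : Fin N → ℝ) ⬝ᵥ (Q *ᵥ 1) = 0 := by
      rcases (integrableOn_const_iff).mp hconst with h | h
      · simpa using h
      · simp [Real.volume_Ici] at h
    have := (hQ.dotProduct_mulVec_zero_iff 1).mp (by simpa using h0)
    exact this
  rcases Nat.eq_zero_or_pos N with hN | hN
  · subst hN
    exact ⟨0, Matrix.PosSemidef.zero, by ext i j; exact isEmptyElim i⟩
  · have hNne : (N : ℝ) ≠ 0 := Nat.cast_ne_zero.mpr hN.ne'
    set J : Matrix (Fin N) (Fin N) ℝ := Matrix.of (fun _ _ => (1:ℝ)) with hJdef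
    have hmulJ : ∀ A : Matrix (Fin N) (Fin N) ℝ, A *ᵥ (1 : Fin N → ℝ) = 0 → A * J = 0 := by
      intro A hA
      ext i j
      have := congrFun hA i
      simpa [Matrix.mul_apply, Matrix.mulVec, dotProduct, hJdef] using this
    have hJsymm : Jᵀ = J := by ext i j; rfl
    have hLJ : L * J = 0 := hmulJ L hL1
    have hQJ : Q * J = 0 := hmulJ Q hQ1
    have hLt : Lᵀ = L := by
      ext i j; exact congrFun (congrFun hL.1 i) j
    have hQt : Qᵀ = Q := by
      ext i j; exact congrFun (congrFun hQ.1 i) j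
    have hJL : J * L = 0 := by
      have := congrArg Matrix.transpose hLJ
      rwa [Matrix.transpose_mul, hJsymm, hLt, Matrix.transpose_zero] at this
    have hJQ : J * Q = 0 := by
      have := congrArg Matrix.transpose hQJ
      rwa [Matrix.transpose_mul, hJsymm, hQt, Matrix.transpose_zero] at this
    have hJJ : J * J = (N : ℝ) • J := by
      ext i j
      simp [Matrix.mul_apply, hJdef, Matrix.smul_apply]
    set M : Matrix (Fin N) (Fin N) ℝ := L + J with hMdef
    have hMh : M.IsHermitian := by
      refine hL.1.add ?_
      show Jᴴ = J
      ext i j; rfl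
    have hMpd : M.PosDef := by
      refine Matrix.PosDef.of_dotProduct_mulVec_pos hMh (fun x hx => ?_)
      have hdot : star x ⬝ᵥ (M *ᵥ x) = x ⬝ᵥ (L *ᵥ x) + (∑ i, x i)^2 := by
        have hJx : x ⬝ᵥ (J *ᵥ x) = (∑ i, x i)^2 := by
          simp [dotProduct, Matrix.mulVec, hJdef, ← Finset.sum_mul, sq, mul_comm]
        simp [hMdef, Matrix.add_mulVec, dotProduct_add, hJx]
      rw [hdot]
      have h1 : 0 ≤ x ⬝ᵥ (L *ᵥ x) := by simpa using hL.dotProduct_mulVec_nonneg x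
      rcases eq_or_lt_of_le h1 with heq | hlt
      · have hLx : L *ᵥ x = 0 := (hL.dotProduct_mulVec_zero_iff x).mp (by simpa using heq.symm)
        have hxker : x ∈ LinearMap.ker L.mulVecLin := by simpa [Matrix.mulVecLin_apply] using hLx
        rw [hker] at hxker
        obtain ⟨a, ha⟩ := Submodule.mem_span_singleton.mp hxker
        have hsum : ∑ i, x i = a * N := by
          rw [← ha]; simp [Finset.sum_const, mul_comm]
        have hane : a ≠ 0 := by
          rintro rfl; exact hx (by rw [← ha]; simp)
        have : (∑ i, x i) ≠ 0 := by
          rw [hsum]; exact mul_ne_zero hane hNne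
        have := pow_pos (abs_pos.mpr this) 2
        nlinarith [sq_nonneg (∑ i, x i), sq_abs (∑ i, x i)]
      · nlinarith [sq_nonneg (∑ i, x i)]
    have hMdet : IsUnit M.det := isUnit_iff_ne_zero.mpr hMpd.det_pos.ne'
    have hMMinv : M * M⁻¹ = 1 := Matrix.mul_nonsing_inv M hMdet
    have hMinvM : M⁻¹ * M = 1 := Matrix.nonsing_inv_mul M hMdet
    set P : Matrix (Fin N) (Fin N) ℝ := 1 - (N : ℝ)⁻¹ • J with hPdef
    have hPM : P * M = L := by
      rw [hPdef, hMdef, Matrix.sub_mul, Matrix.one_mul, Matrix.smul_mul, Matrix.mul_add,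
        hJL, hJJ, zero_add, smul_smul, inv_mul_cancel₀ hNne, one_smul]
      abel
    have hMP : M * P = L := by
      rw [hPdef, hMdef, Matrix.mul_sub, Matrix.mul_one, Matrix.mul_smul, Matrix.add_mul,
        hLJ, hJJ, zero_add, smul_smul, inv_mul_cancel₀ hNne, one_smul]
      abel
    have hLMinv : L * M⁻¹ = P := by
      rw [← hPM, Matrix.mul_assoc, hMMinv, Matrix.mul_one]
    have hMinvL : M⁻¹ * L = P := by
      rw [← hMP, ← Matrix.mul_assoc, hMinvM, Matrix.one_mul]
    have hPQ : P * Q = Q := by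
      rw [hPdef, Matrix.sub_mul, Matrix.one_mul, Matrix.smul_mul, hJQ, smul_zero, sub_zero]
    have hQP : Q * P = Q := by
      rw [hPdef, Matrix.mul_sub, Matrix.mul_one, Matrix.mul_smul, hQJ, smul_zero, sub_zero]
    refine ⟨M⁻¹ * Q * M⁻¹, ?_, ?_⟩
    · have hMinvH : (M⁻¹)ᴴ = M⁻¹ := by
        rw [Matrix.conjTranspose_nonsing_inv, hMh.eq]
      have := hQ.conjTranspose_mul_mul_same M⁻¹
      rwa [hMinvH] at this
    · have hre : L * (M⁻¹ * Q * M⁻¹) * L = (L * M⁻¹) * Q * (M⁻¹ * L) := by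
        noncomm_ring
      rw [hre, hLMinv, hMinvL, hPQ, hQP]
end

section
/- Let L be the Laplacian of a connected simple undirected graph and W a positive semi-definite matrix. Then X0 = ∫₀^∞ e^{-τL} L W L e^{-τL} dτ exists, is positive semi-definite, satisfies the Lyapunov equation -LX - XL + LWL = 0, and satisfies span(1_N) ⊆ ker(X0). Moreover X0 is the unique positive semi-definite solution X of this Lyapunov equation with span(1_N) ⊆ ker(X). -/
open Matrix MeasureTheory Set

private lemma intExp0 {b : ℝ} (hb : 0 < b) :
    ∫ τ in Ici (0:ℝ), Real.exp (-(b * τ)) = 1 / b := by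
  rw [MeasureTheory.integral_Ici_eq_integral_Ioi]
  have h := MeasureTheory.integral_comp_mul_left_Ioi (fun x => Real.exp (-x)) 0 hb
  simp only [mul_zero] at h
  calc ∫ τ in Ioi (0:ℝ), Real.exp (-(b * τ)) = b⁻¹ • ∫ x in Ioi (0:ℝ), Real.exp (-x) := h
    _ = 1 / b := by rw [integral_exp_neg_Ioi_zero]; simp [one_div]

private lemma intExpOn0 {b : ℝ} (hb : 0 < b) :
    IntegrableOn (fun τ : ℝ => Real.exp (-(b * τ))) (Ici 0) := by
  rw [integrableOn_Ici_iff_integrableOn_Ioi]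
  simpa [neg_mul] using exp_neg_integrableOn_Ioi 0 hb

private lemma sandwich_apply0 {N : ℕ} (U G : Matrix (Fin N) (Fin N) ℝ) (i j : Fin N) :
    (U * G * star U) i j = ∑ l, ∑ k, U i k * G k l * U j l := by
  simp [Matrix.mul_apply, Matrix.star_eq_conjTranspose, Matrix.conjTranspose_apply,
    Finset.sum_mul]

/-- For the Laplacian `L` of a connected simple undirected graph and `W ⪰ 0`, the integral
`X0 = ∫₀^∞ e^{-τL} L W L e^{-τL} dτ` exists (entrywise), is PSD, solves the Lyapunov
equation `-LX - XL + LWL = 0`, satisfies `span(1) ⊆ ker X0`, and is the unique PSD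
solution with this kernel property. -/
theorem stmt10 {N : ℕ} (L W : Matrix (Fin N) (Fin N) ℝ)
    (hL : L.PosSemidef)
    (hker : LinearMap.ker L.mulVecLin = Submodule.span ℝ {(1 : Fin N → ℝ)})
    (hW : W.PosSemidef) :
    (∀ i j, IntegrableOn (fun τ : ℝ =>
        (NormedSpace.exp ((-τ) • L) * (L * W * L) * NormedSpace.exp ((-τ) • L)) i j)
        (Ici 0)) ∧
    ∀ X0 : Matrix (Fin N) (Fin N) ℝ,
      X0 = Matrix.of (fun i j => ∫ τ in Ici (0:ℝ),
        (NormedSpace.exp ((-τ) • L) * (L * W * L) * NormedSpace.exp ((-τ) • L)) i j) →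
      X0.PosSemidef ∧ (-(L * X0) - X0 * L + L * W * L = 0) ∧
      Submodule.span ℝ {(1 : Fin N → ℝ)} ≤ LinearMap.ker X0.mulVecLin ∧
      (∀ X : Matrix (Fin N) (Fin N) ℝ, X.PosSemidef →
        -(L * X) - X * L + L * W * L = 0 →
        Submodule.span ℝ {(1 : Fin N → ℝ)} ≤ LinearMap.ker X.mulVecLin → X = X0) := by
  have hH : L.IsHermitian := hL.1
  set U : Matrix (Fin N) (Fin N) ℝ := (hH.eigenvectorUnitary : Matrix (Fin N) (Fin N) ℝ) with hU
  set d : Fin N → ℝ := hH.eigenvalues with hdd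
  have hUU : U * star U = 1 := Matrix.mem_unitaryGroup_iff.mp hH.eigenvectorUnitary.2
  have hsUU : star U * U = 1 := Matrix.mem_unitaryGroup_iff'.mp hH.eigenvectorUnitary.2
  have hLdecomp : L = U * Matrix.diagonal d * star U := by
    have := hH.spectral_theorem
    simpa [RCLike.ofReal_real_eq_id] using this
  have hUinvertible : Invertible U := invertibleOfRightInverse U (star U) hUU
  have hUunit : IsUnit U := isUnit_of_invertible U
  have hUinv : U⁻¹ = star U := Matrix.inv_eq_right_inv hUU
  have hd0 : ∀ k, 0 ≤ d k := fun k => hL.eigenvalues_nonneg k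
  have hexp : ∀ τ : ℝ, NormedSpace.exp ((-τ) • L)
      = U * Matrix.diagonal (fun k => Real.exp (-(τ * d k))) * star U := by
    intro τ
    have h1 : (-τ) • L = U * Matrix.diagonal (fun k => -(τ * d k)) * star U := by
      rw [hLdecomp, ← smul_mul_assoc, ← mul_smul_comm, ← Matrix.diagonal_smul]
      congr 2
      funext k
      simp [Matrix.diagonal, Pi.smul_apply, smul_eq_mul]
    rw [h1, ← hUinv, Matrix.exp_conj U _ hUunit, Matrix.exp_diagonal, hUinv]
    congr 2
    funext k
    rw [Pi.exp_def]
    simp [← Real.exp_eq_exp_ℝ]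
  have hCps : (L * W * L).PosSemidef := by
    have h := hW.mul_mul_conjTranspose_same L
    rw [hH.eq] at h
    exact h
  have hstarT : star U = Uᵀ := by
    rw [Matrix.star_eq_conjTranspose, Matrix.conjTranspose_eq_transpose_of_trivial]
  have hCsymT : (L * W * L)ᵀ = L * W * L := by
    rw [← Matrix.conjTranspose_eq_transpose_of_trivial]; exact hCps.1.eq
  set Ch : Matrix (Fin N) (Fin N) ℝ := star U * (L * W * L) * U with hChdef
  have hLU : L * U = U * Matrix.diagonal d := by
    rw [hLdecomp, mul_assoc, hsUU, mul_one]
  have hsUL : star U * L = Matrix.diagonal d * star U := by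
    rw [hLdecomp, ← mul_assoc, ← mul_assoc, hsUU, one_mul]
  set Wh : Matrix (Fin N) (Fin N) ℝ := star U * W * U with hWhdef
  have hCh : Ch = Matrix.diagonal d * Wh * Matrix.diagonal d := by
    have h1 : Ch = (star U * L) * W * (L * U) := by
      rw [hChdef]; simp only [mul_assoc]
    rw [h1, hsUL, hLU, hWhdef]; simp only [mul_assoc]
  have hChE : ∀ k l, Ch k l = d k * Wh k l * d l := by
    intro k l
    rw [hCh, Matrix.mul_diagonal, Matrix.diagonal_mul]
  have hCh0 : ∀ k l, d k + d l = 0 → Ch k l = 0 := by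
    intro k l h
    have hk : d k = 0 := by have := hd0 k; have := hd0 l; linarith
    rw [hChE k l, hk]; ring
  have hLT : Lᵀ = L := by
    rw [← Matrix.conjTranspose_eq_transpose_of_trivial]; exact hH.eq
  have hWT : Wᵀ = W := by
    rw [← Matrix.conjTranspose_eq_transpose_of_trivial]; exact hW.1.eq
  have hChT : Chᵀ = Ch := by
    rw [hChdef]
    simp [Matrix.transpose_mul, hstarT, hLT, hWT, Matrix.transpose_transpose, mul_assoc]
  have hChsym : ∀ k l, Ch l k = Ch k l := by
    intro k l
    have h := congrFun (congrFun hChT k) l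
    rwa [Matrix.transpose_apply] at h
  set Ybar : Matrix (Fin N) (Fin N) ℝ :=
    Matrix.of (fun k l => Ch k l / (d k + d l)) with hYdef
  -- entrywise formula for the integrand
  have hMentry : ∀ (τ : ℝ) (i j : Fin N),
      (NormedSpace.exp ((-τ) • L) * (L * W * L) * NormedSpace.exp ((-τ) • L)) i j
      = ∑ l, ∑ k, (U i k * Ch k l * U j l) * Real.exp (-((d k + d l) * τ)) := by
    intro τ i j
    rw [hexp τ, show (U * Matrix.diagonal (fun k => Real.exp (-(τ * d k))) * star U) * (L * W * L)
          * (U * Matrix.diagonal (fun k => Real.exp (-(τ * d k))) * star U)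
        = U * (Matrix.diagonal (fun k => Real.exp (-(τ * d k))) * Ch *
            Matrix.diagonal (fun k => Real.exp (-(τ * d k)))) * star U from by
      rw [hChdef]; simp only [mul_assoc]]
    rw [sandwich_apply0]
    refine Finset.sum_congr rfl fun l _ => Finset.sum_congr rfl fun k _ => ?_
    rw [Matrix.mul_diagonal, Matrix.diagonal_mul]
    have he : Real.exp (-(τ * d k)) * Real.exp (-(τ * d l)) = Real.exp (-((d k + d l) * τ)) := by
      rw [← Real.exp_add]; ring_nf
    rw [← he]; ring
  have hterm_int : ∀ (i j k l : Fin N), IntegrableOn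
      (fun τ : ℝ => (U i k * Ch k l * U j l) * Real.exp (-((d k + d l) * τ))) (Ici 0) := by
    intro i j k l
    rcases (add_nonneg (hd0 k) (hd0 l)).lt_or_eq with h | h
    · exact (intExpOn0 h).const_mul _
    · have h0 : Ch k l = 0 := hCh0 k l h.symm
      simp only [h0, mul_zero, zero_mul]
      exact integrableOn_zero
  have hterm_val : ∀ (i j k l : Fin N),
      (∫ τ in Ici (0:ℝ), (U i k * Ch k l * U j l) * Real.exp (-((d k + d l) * τ)))
      = U i k * Ybar k l * U j l := by
    intro i j k l
    rcases (add_nonneg (hd0 k) (hd0 l)).lt_or_eq with h | h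
    · rw [MeasureTheory.integral_const_mul, intExp0 h, hYdef]
      simp only [Matrix.of_apply]
      field_simp
    · have h0 : Ch k l = 0 := hCh0 k l h.symm
      simp [h0, hYdef]
  have hInt : ∀ i j, IntegrableOn (fun τ : ℝ =>
      (NormedSpace.exp ((-τ) • L) * (L * W * L) * NormedSpace.exp ((-τ) • L)) i j)
      (Ici 0) := by
    intro i j
    rw [show (fun τ : ℝ =>
        (NormedSpace.exp ((-τ) • L) * (L * W * L) * NormedSpace.exp ((-τ) • L)) i j)
        = fun τ : ℝ => ∑ l, ∑ k, (U i k * Ch k l * U j l) * Real.exp (-((d k + d l) * τ)) from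
      funext fun τ => hMentry τ i j]
    exact MeasureTheory.integrable_finset_sum _ fun l _ =>
      MeasureTheory.integrable_finset_sum _ fun k _ => hterm_int i j k l
  have hval : ∀ i j, (∫ τ in Ici (0:ℝ),
      (NormedSpace.exp ((-τ) • L) * (L * W * L) * NormedSpace.exp ((-τ) • L)) i j)
      = (U * Ybar * star U) i j := by
    intro i j
    rw [show (fun τ : ℝ =>
        (NormedSpace.exp ((-τ) • L) * (L * W * L) * NormedSpace.exp ((-τ) • L)) i j)
        = fun τ : ℝ => ∑ l, ∑ k, (U i k * Ch k l * U j l) * Real.exp (-((d k + d l) * τ)) from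
      funext fun τ => hMentry τ i j]
    rw [MeasureTheory.integral_finset_sum _ fun l _ =>
      MeasureTheory.integrable_finset_sum _ fun k _ => hterm_int i j k l]
    rw [sandwich_apply0]
    refine Finset.sum_congr rfl fun l _ => ?_
    rw [MeasureTheory.integral_finset_sum _ fun k _ => hterm_int i j k l]
    exact Finset.sum_congr rfl fun k _ => hterm_val i j k l
  have hMpos : ∀ τ : ℝ,
      (NormedSpace.exp ((-τ) • L) * (L * W * L) * NormedSpace.exp ((-τ) • L)).PosSemidef := by
    intro τ
    have hEh : (NormedSpace.exp ((-τ) • L))ᴴ = NormedSpace.exp ((-τ) • L) := by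
      rw [← Matrix.exp_conjTranspose]
      congr 1
      rw [Matrix.conjTranspose_smul, hH.eq]
      simp
    have h := hCps.mul_mul_conjTranspose_same (NormedSpace.exp ((-τ) • L))
    rw [hEh] at h
    exact h
  have h1mem : (1 : Fin N → ℝ) ∈ LinearMap.ker L.mulVecLin := by
    rw [hker]; exact Submodule.mem_span_singleton_self _
  have hL1 : L *ᵥ (1 : Fin N → ℝ) = 0 := by
    simpa [Matrix.mulVecLin_apply] using LinearMap.mem_ker.mp h1mem
  have hw : ∀ k, d k * ((star U *ᵥ (1 : Fin N → ℝ)) k) = 0 := by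
    have hv : Matrix.diagonal d *ᵥ (star U *ᵥ (1 : Fin N → ℝ)) = 0 := by
      rw [Matrix.mulVec_mulVec, ← hsUL, ← Matrix.mulVec_mulVec, hL1, Matrix.mulVec_zero]
    intro k
    have := congrFun hv k
    simpa [Matrix.mulVec, Matrix.diagonal, dotProduct] using this
  have hYw0 : ∀ w : Fin N → ℝ, (∀ k, d k * w k = 0) → Ybar *ᵥ w = 0 := by
    intro w hw0
    funext k
    simp only [Matrix.mulVec, dotProduct, hYdef, Matrix.of_apply, Pi.zero_apply]
    apply Finset.sum_eq_zero
    intro l _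
    rcases mul_eq_zero.mp (hw0 l) with h | h
    · rw [hChE k l, h]; simp
    · rw [h, mul_zero]
  have hYw : Ybar *ᵥ (star U *ᵥ (1 : Fin N → ℝ)) = 0 := hYw0 _ hw
  -- Lyapunov algebra
  have hDY : Matrix.diagonal d * Ybar + Ybar * Matrix.diagonal d = Ch := by
    ext k l
    simp only [Matrix.add_apply, Matrix.diagonal_mul, Matrix.mul_diagonal, hYdef,
      Matrix.of_apply]
    rcases eq_or_ne (d k + d l) 0 with h | h
    · rw [hCh0 k l h, h]; simp
    · field_simp
  constructor
  · exact hInt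
  intro X0 hX0
  have hX0' : X0 = U * Ybar * star U := by
    rw [hX0]; ext i j; exact hval i j
  have hYbarT : Ybarᵀ = Ybar := by
    ext k l
    rw [Matrix.transpose_apply]
    simp only [hYdef, Matrix.of_apply]
    rw [hChsym k l, add_comm]
  have hX0H : X0.IsHermitian := by
    rw [hX0']
    unfold Matrix.IsHermitian
    rw [Matrix.conjTranspose_eq_transpose_of_trivial]
    simp [Matrix.transpose_mul, hYbarT, hstarT, Matrix.transpose_transpose, mul_assoc]
  have hLy : L * X0 + X0 * L = L * W * L := by
    rw [hX0']
    have e1 : L * (U * Ybar * star U) = U * (Matrix.diagonal d * Ybar) * star U := by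
      simp only [← mul_assoc]; rw [hLU]
    have e2 : (U * Ybar * star U) * L = U * (Ybar * Matrix.diagonal d) * star U := by
      simp only [mul_assoc]; rw [hsUL]
    rw [e1, e2, ← Matrix.add_mul, ← Matrix.mul_add, hDY, hChdef]
    simp only [← mul_assoc]
    rw [hUU, one_mul, mul_assoc, hUU, mul_one]
  refine ⟨Matrix.posSemidef_iff_dotProduct_mulVec.mpr ⟨hX0H, ?_⟩, ?_, ?_, ?_⟩
  · -- quadratic form nonneg
    intro x
    have hsx : star x = x := funext fun i => by simp
    rw [hsx]
    have hq1 : x ⬝ᵥ (X0 *ᵥ x) = ∑ i, ∑ j, (x i * x j) * X0 i j := by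
      simp only [dotProduct, Matrix.mulVec, Finset.mul_sum]
      exact Finset.sum_congr rfl fun i _ => Finset.sum_congr rfl fun j _ => by ring
    have hq2 : ∀ i j, (x i * x j) * X0 i j = ∫ τ in Ici (0:ℝ), (x i * x j) *
        ((NormedSpace.exp ((-τ) • L) * (L * W * L) * NormedSpace.exp ((-τ) • L)) i j) := by
      intro i j
      rw [hX0]
      simp only [Matrix.of_apply]
      rw [MeasureTheory.integral_const_mul]
    have hint2 : ∀ i j : Fin N, Integrable (fun τ : ℝ => (x i * x j) *
        ((NormedSpace.exp ((-τ) • L) * (L * W * L) * NormedSpace.exp ((-τ) • L)) i j))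
        (volume.restrict (Ici 0)) := fun i j => (hInt i j).const_mul _
    have hq3 : x ⬝ᵥ (X0 *ᵥ x) = ∫ τ in Ici (0:ℝ), ∑ i, ∑ j, (x i * x j) *
        ((NormedSpace.exp ((-τ) • L) * (L * W * L) * NormedSpace.exp ((-τ) • L)) i j) := by
      rw [hq1]
      rw [Finset.sum_congr rfl fun i _ => Finset.sum_congr rfl fun j _ => hq2 i j]
      rw [MeasureTheory.integral_finset_sum _ fun i _ =>
        MeasureTheory.integrable_finset_sum _ fun j _ => hint2 i j]
      exact Finset.sum_congr rfl fun i _ =>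
        (MeasureTheory.integral_finset_sum _ fun j _ => hint2 i j).symm
    rw [hq3]
    apply MeasureTheory.setIntegral_nonneg measurableSet_Ici
    intro τ _
    have hqf : ∑ i, ∑ j, (x i * x j) *
        ((NormedSpace.exp ((-τ) • L) * (L * W * L) * NormedSpace.exp ((-τ) • L)) i j)
        = star x ⬝ᵥ ((NormedSpace.exp ((-τ) • L) * (L * W * L)
            * NormedSpace.exp ((-τ) • L)) *ᵥ x) := by
      simp only [hsx, dotProduct, Matrix.mulVec, Finset.mul_sum]
      exact Finset.sum_congr rfl fun i _ => Finset.sum_congr rfl fun j _ => by ring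
    rw [hqf]
    exact (Matrix.posSemidef_iff_dotProduct_mulVec.mp (hMpos τ)).2 x
  · rw [← hLy]; abel
  · -- kernel
    rw [Submodule.span_le]
    intro y hy
    rw [Set.mem_singleton_iff] at hy
    subst hy
    rw [SetLike.mem_coe, LinearMap.mem_ker, Matrix.mulVecLin_apply, hX0',
      ← Matrix.mulVec_mulVec, ← Matrix.mulVec_mulVec, hYw, Matrix.mulVec_zero]
  · -- uniqueness
    intro X hXpsd hXly hXker
    have hX1 : X *ᵥ (1 : Fin N → ℝ) = 0 := by
      have hmem : (1 : Fin N → ℝ) ∈ LinearMap.ker X.mulVecLin :=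
        hXker (Submodule.mem_span_singleton_self _)
      simpa [Matrix.mulVecLin_apply] using LinearMap.mem_ker.mp hmem
    have hXLy : L * X + X * L = L * W * L := by
      rw [← sub_eq_zero]
      have h2 : L * X + X * L - L * W * L = -(-(L * X) - X * L + L * W * L) := by abel
      rw [h2, hXly, neg_zero]
    set Xh : Matrix (Fin N) (Fin N) ℝ := star U * X * U with hXhdef
    have hDXh : Matrix.diagonal d * Xh + Xh * Matrix.diagonal d = Ch := by
      have e1 : Matrix.diagonal d * Xh = star U * (L * X) * U := by
        rw [hXhdef]; simp only [← mul_assoc]; rw [← hsUL]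
      have e2 : Xh * Matrix.diagonal d = star U * (X * L) * U := by
        calc Xh * Matrix.diagonal d = star U * (X * (U * Matrix.diagonal d)) := by
              rw [hXhdef]; simp only [mul_assoc]
          _ = star U * (X * (L * U)) := by rw [← hLU]
          _ = star U * (X * L) * U := by simp only [mul_assoc]
      rw [e1, e2, ← Matrix.add_mul, ← Matrix.mul_add, hXLy, hChdef]
    have hXhE : ∀ k l, (d k + d l) * Xh k l = Ch k l := by
      intro k l
      have h : (Matrix.diagonal d * Xh + Xh * Matrix.diagonal d) k l = Ch k l := by rw [hDXh]
      rw [Matrix.add_apply, Matrix.diagonal_mul, Matrix.mul_diagonal] at h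
      rw [← h]; ring
    have hcol : ∀ l, d l = 0 → X *ᵥ (fun i => U i l) = 0 := by
      intro l hl
      have hmem : (fun i => U i l) ∈ LinearMap.ker L.mulVecLin := by
        rw [LinearMap.mem_ker, Matrix.mulVecLin_apply]
        funext i
        have hLUe : (L * U) i l = (U * Matrix.diagonal d) i l := by rw [hLU]
        rw [Matrix.mul_apply, Matrix.mul_diagonal, hl, mul_zero] at hLUe
        simpa [Matrix.mulVec, dotProduct] using hLUe
      rw [hker] at hmem
      rcases Submodule.mem_span_singleton.mp hmem with ⟨c, hc⟩
      rw [← hc, Matrix.mulVec_smul, hX1, smul_zero]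
    have hXhY : Xh = Ybar := by
      ext k l
      rcases eq_or_ne (d k + d l) 0 with h | h
      · have hl : d l = 0 := by have := hd0 k; have := hd0 l; linarith
        have hXh0 : Xh k l = 0 := by
          have hcolX : (star U * X) *ᵥ (fun i => U i l) = 0 := by
            rw [← Matrix.mulVec_mulVec, hcol l hl, Matrix.mulVec_zero]
          have he : Xh k l = ((star U * X) *ᵥ (fun i => U i l)) k := by
            rw [hXhdef, Matrix.mul_apply]
            simp [Matrix.mulVec, dotProduct]
          rw [he, hcolX, Pi.zero_apply]
        rw [hXh0, hYdef]
        simp [hCh0 k l h]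
      · have hE := hXhE k l
        rw [hYdef]
        simp only [Matrix.of_apply]
        rw [eq_div_iff h, ← hE]; ring
    have hXrec : X = U * Xh * star U := by
      rw [hXhdef]
      simp only [← mul_assoc]
      rw [hUU, one_mul, mul_assoc, hUU, mul_one]
    rw [hXrec, hXhY, ← hX0']
end

section
/- Let R be a positive definite N×N matrix and L the Laplacian of a connected simple undirected graph. Let Y0 be the positive semi-definite solution of -LY - YL + LRL = 0 with span(1_N) ⊆ ker(Y0). Then ker(Y0) = span(1_N) exactly. -/
open Matrix

/-- For `R ≻ 0` and the Laplacian `L` of a connected simple undirected graph, if `Y0 ⪰ 0`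
solves `-LY - YL + LRL = 0` with `span(1) ⊆ ker Y0`, then `ker Y0 = span(1)` exactly. -/
theorem stmt11 {N : ℕ} (L R Y0 : Matrix (Fin N) (Fin N) ℝ)
    (hL : L.PosSemidef)
    (hker : LinearMap.ker L.mulVecLin = Submodule.span ℝ {(1 : Fin N → ℝ)})
    (hR : R.PosDef)
    (hY0 : Y0.PosSemidef)
    (hLyap : -(L * Y0) - Y0 * L + L * R * L = 0)
    (hkerY : Submodule.span ℝ {(1 : Fin N → ℝ)} ≤ LinearMap.ker Y0.mulVecLin) :
    LinearMap.ker Y0.mulVecLin = Submodule.span ℝ {(1 : Fin N → ℝ)} := by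
  refine le_antisymm ?_ hkerY
  intro x hx
  simp only [LinearMap.mem_ker, mulVecLin_apply] at hx
  rw [← hker]
  simp only [LinearMap.mem_ker, mulVecLin_apply]
  -- show L *ᵥ x = 0
  by_contra hLx
  have hY0T : Y0ᵀ = Y0 := by
    have := hY0.1.eq; rwa [Matrix.conjTranspose_eq_transpose_of_trivial] at this
  have hLT : Lᵀ = L := by
    have := hL.1.eq; rwa [Matrix.conjTranspose_eq_transpose_of_trivial] at this
  have hLRL : L * R * L = L * Y0 + Y0 * L := by
    have h := hLyap
    rw [← sub_eq_zero]
    rw [← h]; abel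
  have key : x ⬝ᵥ (L * R * L) *ᵥ x = 0 := by
    rw [hLRL, Matrix.add_mulVec, dotProduct_add]
    have h1 : (L * Y0) *ᵥ x = 0 := by
      rw [← Matrix.mulVec_mulVec, hx, Matrix.mulVec_zero]
    have h2 : x ⬝ᵥ (Y0 * L) *ᵥ x = 0 := by
      rw [← Matrix.mulVec_mulVec, Matrix.dotProduct_mulVec,
        ← Matrix.mulVec_transpose, hY0T, hx]
      simp
    rw [h1, h2, dotProduct_zero, add_zero]
  have hform : x ⬝ᵥ (L * R * L) *ᵥ x = (L *ᵥ x) ⬝ᵥ R *ᵥ (L *ᵥ x) := by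
    rw [Matrix.mul_assoc, ← Matrix.mulVec_mulVec, ← Matrix.mulVec_mulVec,
      Matrix.dotProduct_mulVec, ← Matrix.mulVec_transpose, hLT]
  have := hR.dotProduct_mulVec_pos hLx
  simp only [star_trivial] at this
  rw [← hform, key] at this
  exact lt_irrefl 0 this
end

section
/- Consider the discrete-time system x(k+1) = A x(k), y(k) = C x(k) with A ∈ ℝ^{n×n}, C ∈ ℝ^{p×n}. Then y(k) → 0 as k → ∞ for every initial state x(0) if and only if X₊(A) ⊆ ker(C), where X₊(A) is the sum of the generalized eigenspaces of A associated with eigenvalues λ with |λ| ≥ 1. -/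
open Matrix Filter Topology

namespace Stmt13Aux

lemma mulVec_map_ofReal {p n : ℕ} (M : Matrix (Fin p) (Fin n) ℝ) (v : Fin n → ℝ) :
    (M.map Complex.ofReal) *ᵥ (fun i => (v i : ℂ)) = fun i => ((M *ᵥ v) i : ℂ) := by
  funext i
  simp only [Matrix.mulVec, dotProduct, Matrix.map_apply]
  push_cast
  rfl

lemma mulVecLin_pow {n : ℕ} (M : Matrix (Fin n) (Fin n) ℂ) (k : ℕ) :
    (M.mulVecLin) ^ k = (M ^ k).mulVecLin := by
  induction k with
  | zero => simp [Matrix.mulVecLin_one]; rfl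
  | succ k ih =>
    rw [pow_succ, pow_succ, ih, Matrix.mulVecLin_mul]
    rfl

lemma map_ofReal_pow {n : ℕ} (A : Matrix (Fin n) (Fin n) ℝ) (k : ℕ) :
    (A.map Complex.ofReal) ^ k = (A ^ k).map Complex.ofReal := by
  have := map_pow (Complex.ofRealHom.mapMatrix : Matrix (Fin n) (Fin n) ℝ →+* _) A k
  exact this.symm

lemma aux_tendsto (i : ℕ) {r : ℝ} (h0 : 0 ≤ r) (h1 : r < 1) :
    Tendsto (fun k : ℕ => (k.choose i : ℝ) * r ^ (k - i)) atTop (𝓝 0) := by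
  rcases eq_or_lt_of_le h0 with h | h
  · have heq : (fun _ : ℕ => (0 : ℝ)) =ᶠ[atTop] fun k : ℕ => (k.choose i : ℝ) * r ^ (k - i) := by
      filter_upwards [eventually_gt_atTop i] with k hk
      rw [← h, zero_pow (by omega), mul_zero]
    exact Tendsto.congr' heq tendsto_const_nhds
  · have hr : r ≠ 0 := ne_of_gt h
    have H : Tendsto (fun k : ℕ => ((k : ℝ) ^ i * r ^ k) * r⁻¹ ^ i) atTop
        (𝓝 (0 * r⁻¹ ^ i)) :=
      (tendsto_pow_const_mul_const_pow_of_lt_one i h0 h1).mul_const _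
    rw [zero_mul] at H
    refine squeeze_zero' ?_ ?_ H
    · exact Filter.Eventually.of_forall fun k =>
        mul_nonneg (Nat.cast_nonneg _) (pow_nonneg h0 _)
    · filter_upwards [eventually_ge_atTop i] with k hk
      have hpow : r ^ (k - i) = r ^ k * r⁻¹ ^ i := by
        rw [pow_sub₀ _ hr hk, inv_pow]
      rw [hpow]
      calc (k.choose i : ℝ) * (r ^ k * r⁻¹ ^ i)
          ≤ (k : ℝ) ^ i * (r ^ k * r⁻¹ ^ i) :=
            mul_le_mul_of_nonneg_right (by exact_mod_cast Nat.choose_le_pow k i)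
              (by positivity)
        _ = (k : ℝ) ^ i * r ^ k * r⁻¹ ^ i := by ring

variable {n p : ℕ}

/-- Unstable eigenvalue: if `C ∘ B^k z → 0` for all `z` then `C` kills the generalized
eigenspace. -/
lemma cl_eq_zero {μ : ℂ} (hμ : 1 ≤ ‖μ‖)
    (B : Module.End ℂ (Fin n → ℂ)) (Cl : (Fin n → ℂ) →ₗ[ℂ] (Fin p → ℂ))
    (hQ : ∀ z, Tendsto (fun k : ℕ => Cl ((B ^ k) z)) atTop (𝓝 0)) :
    ∀ m : ℕ, ∀ z, ((B - μ • 1) ^ m) z = 0 → Cl z = 0 := by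
  intro m
  induction m with
  | zero =>
    intro z hz
    simp only [pow_zero, Module.End.one_apply] at hz
    simp [hz]
  | succ m ih =>
    intro z hz
    set N : Module.End ℂ (Fin n → ℂ) := B - μ • 1 with hN
    have hcommBN : Commute B N := by
      have h1 : Commute B (μ • (1 : Module.End ℂ (Fin n → ℂ))) :=
        (Commute.one_right B).smul_right μ
      exact (Commute.refl B).sub_right h1
    have hBz : ∀ w, B w = μ • w + N w := by
      intro w
      simp only [hN, LinearMap.sub_apply, LinearMap.smul_apply, Module.End.one_apply]
      abel
    have key : ∀ k : ℕ, Cl ((B ^ k) z) = μ ^ k • Cl z := by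
      intro k
      induction k with
      | zero => simp
      | succ k ihk =>
        have h1 : (B ^ (k + 1)) z = (B ^ k) (μ • z + N z) := by
          rw [pow_succ, Module.End.mul_apply, hBz z]
        have h2 : Cl ((B ^ k) (N z)) = 0 := by
          apply ih
          have : (N ^ m) ((B ^ k) (N z)) = (B ^ k) ((N ^ (m + 1)) z) := by
            have hc : N ^ m * B ^ k = B ^ k * N ^ m :=
              ((hcommBN.symm).pow_pow m k)
            calc (N ^ m) ((B ^ k) (N z)) = ((N ^ m * B ^ k)) (N z) := rfl
              _ = ((B ^ k * N ^ m)) (N z) := by rw [hc]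
              _ = (B ^ k) ((N ^ m) (N z)) := rfl
              _ = (B ^ k) ((N ^ (m + 1)) z) := by rw [pow_succ, Module.End.mul_apply]
          rw [this, hz, map_zero]
        rw [h1, map_add, map_add, h2, add_zero, _root_.map_smul, _root_.map_smul,
          ihk, smul_smul, ← pow_succ']
    have hT : Tendsto (fun k : ℕ => ‖μ ^ k • Cl z‖) atTop (𝓝 0) := by
      have := (hQ z).norm
      rw [norm_zero] at this
      refine this.congr fun k => ?_
      rw [key k]
    have hle : ‖Cl z‖ ≤ 0 := by
      refine ge_of_tendsto' hT fun k => ?_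
      rw [norm_smul, norm_pow]
      calc ‖Cl z‖ = 1 * ‖Cl z‖ := (one_mul _).symm
        _ ≤ ‖μ‖ ^ k * ‖Cl z‖ := by
            gcongr
            exact one_le_pow₀ hμ
    exact norm_le_zero_iff.mp hle

/-- Stable eigenvalue: `B^k z → 0` on the generalized eigenspace. -/
lemma tendsto_pow_apply_zero {μ : ℂ} (hμ : ‖μ‖ < 1)
    (B : Module.End ℂ (Fin n → ℂ)) :
    ∀ m : ℕ, ∀ z, ((B - μ • 1) ^ m) z = 0 →
      Tendsto (fun k : ℕ => (B ^ k) z) atTop (𝓝 0) := by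
  intro m z hz
  set N : Module.End ℂ (Fin n → ℂ) := B - μ • 1 with hN
  have hB : B = N + μ • 1 := by rw [hN]; abel
  have hcomm : Commute N (μ • (1 : Module.End ℂ (Fin n → ℂ))) :=
    ((Commute.one_right N).smul_right μ)
  have hNz : ∀ i, m ≤ i → (N ^ i) z = 0 := by
    intro i hi
    have : N ^ i = N ^ (i - m) * N ^ m := by rw [← pow_add]; congr 1; omega
    rw [this, Module.End.mul_apply, hz, map_zero]
  have hform : ∀ k : ℕ, (B ^ k) z =
      ∑ i ∈ Finset.range (k + 1), ((k.choose i : ℂ) * μ ^ (k - i)) • (N ^ i) z := by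
    intro k
    rw [hB, hcomm.add_pow]
    rw [LinearMap.coe_sum, Finset.sum_apply]
    refine Finset.sum_congr rfl fun i hi => ?_
    have h1 : (μ • (1 : Module.End ℂ (Fin n → ℂ))) ^ (k - i)
        = μ ^ (k - i) • 1 := by rw [smul_pow, one_pow]
    rw [h1]
    show (N ^ i) ((μ ^ (k - i) • (1 : Module.End ℂ (Fin n → ℂ)))
      (((k.choose i : ℕ) : Module.End ℂ (Fin n → ℂ)) z)) = _
    simp only [LinearMap.smul_apply, Module.End.one_apply, Module.End.natCast_apply]
    rw [_root_.map_smul, map_nsmul, mul_smul, Nat.cast_smul_eq_nsmul]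
    rw [smul_comm]
  have heq : ∀ᶠ k in atTop, (B ^ k) z =
      ∑ i ∈ Finset.range m, ((k.choose i : ℂ) * μ ^ (k - i)) • (N ^ i) z := by
    filter_upwards [eventually_ge_atTop m] with k hk
    rw [hform k]
    refine (Finset.sum_subset ?_ ?_).symm
    · intro i hi; simp only [Finset.mem_range] at *; omega
    · intro i _ hi
      simp only [Finset.mem_range, not_lt] at hi
      rw [hNz i hi, smul_zero]
  have hsum : Tendsto (fun k : ℕ =>
      ∑ i ∈ Finset.range m, ((k.choose i : ℂ) * μ ^ (k - i)) • (N ^ i) z)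
      atTop (𝓝 0) := by
    have : (0 : Fin n → ℂ) = ∑ i ∈ Finset.range m, (0 : Fin n → ℂ) := by simp
    rw [this]
    refine tendsto_finset_sum _ fun i _ => ?_
    have hc : Tendsto (fun k : ℕ => (k.choose i : ℂ) * μ ^ (k - i)) atTop (𝓝 0) := by
      rw [tendsto_zero_iff_norm_tendsto_zero]
      have := aux_tendsto i (norm_nonneg μ) hμ
      refine this.congr fun k => ?_
      rw [norm_mul, norm_pow]
      congr 1
      simp
    have := hc.smul_const ((N ^ i) z)
    simpa using this
  exact Tendsto.congr' (heq.mono fun _ hk => hk.symm) hsum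

end Stmt13Aux

open Stmt13Aux

/-- For the discrete-time system `x(k+1) = A x(k)`, `y(k) = C x(k)`: `y(k) → 0` for every
initial state iff the unstable subspace `X₊(A)` (the sum of generalized eigenspaces of `A`
for eigenvalues `λ` with `|λ| ≥ 1`, taken over `ℂ`) is contained in `ker C`. -/
theorem stmt13 {n p : ℕ} (A : Matrix (Fin n) (Fin n) ℝ) (C : Matrix (Fin p) (Fin n) ℝ) :
    (∀ x0 : Fin n → ℝ,
        Tendsto (fun k : ℕ => C *ᵥ ((A ^ k) *ᵥ x0)) atTop (𝓝 0)) ↔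
      (∀ z : Fin n → ℂ,
        z ∈ (⨆ μ ∈ {μ : ℂ | 1 ≤ ‖μ‖},
          Module.End.maxGenEigenspace (Matrix.mulVecLin (A.map Complex.ofReal)) μ) →
        (C.map Complex.ofReal) *ᵥ z = 0) := by
  set B : Module.End ℂ (Fin n → ℂ) := (A.map Complex.ofReal).mulVecLin with hB
  set Cl : (Fin n → ℂ) →ₗ[ℂ] (Fin p → ℂ) := (C.map Complex.ofReal).mulVecLin with hCl
  have hBk : ∀ k : ℕ, B ^ k = ((A ^ k).map Complex.ofReal).mulVecLin := by
    intro k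
    rw [hB, mulVecLin_pow, map_ofReal_pow]
  have hbridge : ∀ (x0 : Fin n → ℝ) (k : ℕ),
      Cl ((B ^ k) (fun i => (x0 i : ℂ))) = fun i => ((C *ᵥ ((A ^ k) *ᵥ x0)) i : ℂ) := by
    intro x0 k
    rw [hBk k]
    rw [hCl]
    simp only [Matrix.mulVecLin_apply]
    rw [mulVec_map_ofReal, mulVec_map_ofReal]
  have hreal_complex : ∀ (x0 : Fin n → ℝ),
      Tendsto (fun k : ℕ => C *ᵥ ((A ^ k) *ᵥ x0)) atTop (𝓝 0) →
      Tendsto (fun k : ℕ => Cl ((B ^ k) (fun i => (x0 i : ℂ)))) atTop (𝓝 0) := by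
    intro x0 h
    have : Tendsto (fun k : ℕ => fun i => ((C *ᵥ ((A ^ k) *ᵥ x0)) i : ℂ)) atTop (𝓝 0) := by
      rw [tendsto_pi_nhds]
      intro i
      have hi : Tendsto (fun k : ℕ => (C *ᵥ ((A ^ k) *ᵥ x0)) i) atTop (𝓝 0) := by
        have := tendsto_pi_nhds.mp h i
        simpa using this
      have := (Complex.continuous_ofReal.tendsto 0).comp hi
      simpa [Function.comp_def] using this
    exact this.congr fun k => (hbridge x0 k).symm
  constructor
  · -- forward
    intro h z hz
    have Qc : ∀ w : Fin n → ℂ, Tendsto (fun k : ℕ => Cl ((B ^ k) w)) atTop (𝓝 0) := by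
      intro w
      set u : Fin n → ℝ := fun i => (w i).re with hu
      set v : Fin n → ℝ := fun i => (w i).im with hv
      have hw : w = (fun i => (u i : ℂ)) + Complex.I • (fun i => (v i : ℂ)) := by
        funext i
        simp only [Pi.add_apply, Pi.smul_apply, smul_eq_mul, hu, hv]
        rw [mul_comm]
        exact (Complex.re_add_im (w i)).symm
      have h1 := hreal_complex u (h u)
      have h2 := (hreal_complex v (h v)).const_smul Complex.I
      rw [smul_zero] at h2
      have := h1.add h2
      rw [add_zero] at this
      refine this.congr fun k => ?_
      simp only [hw, map_add, _root_.map_smul]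
    -- now use the unstable lemma
    have hker : (⨆ μ ∈ {μ : ℂ | 1 ≤ ‖μ‖}, Module.End.maxGenEigenspace B μ) ≤
        LinearMap.ker Cl := by
      refine iSup₂_le fun μ hμ => ?_
      intro w hw
      rw [LinearMap.mem_ker]
      rw [Module.End.mem_maxGenEigenspace] at hw
      obtain ⟨m, hm⟩ := hw
      exact cl_eq_zero hμ B Cl Qc m w hm
    have := hker hz
    rw [LinearMap.mem_ker] at this
    rw [← Matrix.mulVecLin_apply, ← hCl]
    exact this
  · -- backward
    intro h x0
    set z0 : Fin n → ℂ := fun i => (x0 i : ℂ) with hz0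
    have hmem : z0 ∈ ⨆ μ : ℂ, Module.End.maxGenEigenspace B μ := by
      rw [Module.End.iSup_maxGenEigenspace_eq_top]
      trivial
    have hQz : Tendsto (fun k : ℕ => Cl ((B ^ k) z0)) atTop (𝓝 0) := by
      refine Submodule.iSup_induction (motive := fun w =>
          Tendsto (fun k : ℕ => Cl ((B ^ k) w)) atTop (𝓝 0)) _ hmem ?_ ?_ ?_
      · intro μ w hw
        rw [Module.End.mem_maxGenEigenspace] at hw
        obtain ⟨m, hm⟩ := hw
        rcases le_or_gt 1 ‖μ‖ with hμ | hμ
        · -- unstable eigenvalue: C kills the invariant subspace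
          have hinv : ∀ k : ℕ, Cl ((B ^ k) w) = 0 := by
            intro k
            have hmemk : (B ^ k) w ∈
                (⨆ μ ∈ {μ : ℂ | 1 ≤ ‖μ‖}, Module.End.maxGenEigenspace B μ) := by
              apply Submodule.mem_iSup_of_mem μ
              apply Submodule.mem_iSup_of_mem hμ
              rw [Module.End.mem_maxGenEigenspace]
              refine ⟨m, ?_⟩
              have hcommBN : Commute B (B - μ • 1) := by
                exact (Commute.refl B).sub_right ((Commute.one_right B).smul_right μ)
              have hc : (B - μ • 1) ^ m * B ^ k = B ^ k * (B - μ • 1) ^ m :=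
                (hcommBN.symm).pow_pow m k
              calc ((B - μ • 1) ^ m) ((B ^ k) w)
                  = (((B - μ • 1) ^ m) * B ^ k) w := rfl
                _ = (B ^ k * ((B - μ • 1) ^ m)) w := by rw [hc]
                _ = (B ^ k) (((B - μ • 1) ^ m) w) := rfl
                _ = 0 := by rw [hm, map_zero]
            have := h _ hmemk
            rw [← Matrix.mulVecLin_apply, ← hCl] at this
            exact this
          refine Tendsto.congr (fun k => (hinv k).symm) tendsto_const_nhds
        · -- stable eigenvalue
          have htend := tendsto_pow_apply_zero hμ B m w hm
          have hcont : Continuous Cl := Cl.continuous_of_finiteDimensional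
          have := (hcont.tendsto 0).comp htend
          simpa [Function.comp_def] using this
      · simp
      · intro a b ha hb
        have := ha.add hb
        rw [add_zero] at this
        refine this.congr fun k => ?_
        rw [map_add, map_add]
    -- back to real
    have hc : Tendsto (fun k : ℕ => fun i => ((C *ᵥ ((A ^ k) *ᵥ x0)) i : ℂ))
        atTop (𝓝 0) := hQz.congr fun k => hbridge x0 k
    rw [tendsto_pi_nhds]
    intro i
    have hci : Tendsto (fun k : ℕ => ((C *ᵥ ((A ^ k) *ᵥ x0)) i : ℂ)) atTop (𝓝 0) := by
      have := tendsto_pi_nhds.mp hc i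
      simpa using this
    have := (Complex.continuous_re.tendsto 0).comp hci
    simpa [Function.comp_def] using this
end
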